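/- Let G = PSL₂(q), where q ≡ 1 mod 4 and q = p^k for some odd prime p. Let T₁ and T₂ be cyclic subgroups of G each of cardinality (q−1)/2, and let i₁ ∈ T₁ and i₂ ∈ T₂ be involutions. Assume the product i₁·i₂ has odd order m, and set z = (i₁·i₂)^{(m+1)/2}. Then z^{-1} T₁ z = T₂. -/

import Mathlib

/-- `PSL₂(F)`: the quotient of `SL₂(F)` by its center. -/
abbrev PSL2 (F : Type*) [Field F] : Type _ :=
  Matrix.SpecialLinearGroup (Fin 2) F ⧸
    Subgroup.center (Matrix.SpecialLinearGroup (Fin 2) F)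

section Aux
variable {F : Type*} [Field F]

local notation "SL2" => Matrix.SpecialLinearGroup (Fin 2) F

/-- the element `-1` of `SL₂`. -/
def negOne : SL2 := ⟨-1, by simp [Matrix.det_fin_two]⟩

@[simp] lemma diag_neg_one : (Matrix.diagonal (-1) : Matrix (Fin 2) (Fin 2) F) = -1 := by
  ext i j
  fin_cases i <;> fin_cases j <;> simp [Matrix.diagonal, Matrix.one_apply]

lemma negOne_coe : (negOne : SL2).1 = (-1 : Matrix (Fin 2) (Fin 2) F) := rfl

lemma mem_center_iff' {A : SL2} :
    A ∈ Subgroup.center SL2 ↔ A = 1 ∨ A = negOne := by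
  rw [Matrix.SpecialLinearGroup.mem_center_iff]
  constructor
  · rintro ⟨r, hr, hA⟩
    have h2' : r ^ (Fintype.card (Fin 2)) = r ^ 2 := by norm_num
    rw [h2'] at hr
    have hz : (r - 1) * (r + 1) = 0 := by linear_combination hr
    rcases mul_eq_zero.mp hz with h | h
    · left
      apply Subtype.ext
      have hr1 : r = 1 := by linear_combination h
      rw [← hA, hr1]
      simp
    · right
      apply Subtype.ext
      have hr1 : r = -1 := by linear_combination h
      rw [← hA, hr1, negOne_coe]
      simp [Matrix.scalar, diag_neg_one]
  · rintro (rfl | rfl)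
    · exact ⟨1, by simp, by simp⟩
    · exact ⟨-1, by norm_num, by simp [negOne_coe, Matrix.scalar]⟩

lemma mk_eq_mk {A B : SL2} :
    (QuotientGroup.mk A : PSL2 F) = QuotientGroup.mk B ↔ B = A ∨ B = A * negOne := by
  rw [QuotientGroup.eq, mem_center_iff']
  constructor
  · rintro (h | h)
    · left; rw [← mul_one A, ← h]; group
    · right; rw [← h]; group
  · rintro (rfl | rfl)
    · left; group
    · right; group

lemma negOne_mul_negOne : (negOne * negOne : SL2) = 1 := by
  apply Subtype.ext
  rw [Matrix.SpecialLinearGroup.coe_mul, negOne_coe]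
  simp

lemma mk_negOne_sq (A : SL2) : ((A * negOne) * (A * negOne) : SL2) = A * A := by
  apply Subtype.ext
  simp only [Matrix.SpecialLinearGroup.coe_mul, negOne_coe]
  simp [mul_neg, neg_mul]

/-- entries of `A` when `A^2 = -1` in `SL₂`: trace is zero. -/
lemma trace_eq_zero_of_sq (A : SL2) (hA : A * A = negOne) :
    A.1 1 1 = - A.1 0 0 := by
  have hm : A.1 * A.1 = (-1 : Matrix (Fin 2) (Fin 2) F) := by
    rw [← Matrix.SpecialLinearGroup.coe_mul, hA, negOne_coe]
  have hdet : A.1 0 0 * A.1 1 1 - A.1 0 1 * A.1 1 0 = 1 := by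
    have := A.2
    rwa [Matrix.det_fin_two] at this
  have e00 := congrFun (congrFun hm 0) 0
  have e11 := congrFun (congrFun hm 1) 1
  simp [Matrix.mul_apply, Fin.sum_univ_two, Matrix.one_apply] at e00 e11
  have key : (A.1 0 0 + A.1 1 1) * (A.1 0 0 + A.1 1 1) = 0 := by
    linear_combination e00 + e11 + 2 * hdet
  have h := mul_self_eq_zero.mp key
  linear_combination h

lemma entry_sq_of_sq (A : SL2) (hA : A * A = negOne) :
    A.1 0 0 * A.1 0 0 + A.1 0 1 * A.1 1 0 = -1 := by
  have hm : A.1 * A.1 = (-1 : Matrix (Fin 2) (Fin 2) F) := by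
    rw [← Matrix.SpecialLinearGroup.coe_mul, hA, negOne_coe]
  have e00 := congrFun (congrFun hm 0) 0
  simpa [Matrix.mul_apply, Fin.sum_univ_two, Matrix.one_apply] using e00

/-- scalar-level commutant computation. -/
lemma commutant_scalar (h2 : (2:F) ≠ 0) (a b c x y z w : F)
    (hA : a * a + b * c = -1)
    (h01 : a * y + b * w = x * b - y * a)
    (h10 : c * x - a * z = z * a + w * c)
    (h11 : c * y - a * w = z * b - w * a) :
    ∃ s t, x = s + t * a ∧ y = t * b ∧ z = t * c ∧ w = s - t * a := by
  by_cases hb : b ≠ 0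
  · refine ⟨x - (y / b) * a, y / b, by ring, by field_simp, ?_, ?_⟩
    · field_simp
      linear_combination -h11
    · field_simp
      linear_combination h01
  push_neg at hb
  subst hb
  by_cases hc : c ≠ 0
  · have ha : a ≠ 0 := by
      intro h; rw [h] at hA; simp at hA
    have hy : y = 0 := by
      have h2y : (2 * a) * y = 0 := by linear_combination h01
      rcases mul_eq_zero.mp h2y with h | h
      · rcases mul_eq_zero.mp h with h' | h'
        · exact absurd h' h2
        · exact absurd h' ha
      · exact h
    refine ⟨x - (z / c) * a, z / c, by ring, by simp [hy], by field_simp, ?_⟩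
    field_simp
    linear_combination -h10
  push_neg at hc
  subst hc
  have ha : a ≠ 0 := by
    intro h; rw [h] at hA; simp at hA
  refine ⟨(x + w) / 2, (x - w) / (2 * a), ?_, ?_, ?_, ?_⟩
  · field_simp; ring
  · have h2y : (2 * a) * y = 0 := by linear_combination h01
    have hy : y = 0 := by
      rcases mul_eq_zero.mp h2y with h | h
      · rcases mul_eq_zero.mp h with h' | h'
        · exact absurd h' h2
        · exact absurd h' ha
      · exact h
    simp [hy]
  · have h2z : (2 * a) * z = 0 := by linear_combination -h10
    have hz : z = 0 := by
      rcases mul_eq_zero.mp h2z with h | h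
      · rcases mul_eq_zero.mp h with h' | h'
        · exact absurd h' h2
        · exact absurd h' ha
      · exact h
    simp [hz]
  · field_simp; ring

/-- scalar-level anticommutant: trace of `B` vanishes. -/
lemma anticommutant_scalar (h2 : (2:F) ≠ 0) (a b c x y z w : F)
    (hA : a * a + b * c = -1)
    (e00 : a * x + b * z = -(x * a + y * c))
    (e01 : a * y + b * w = -(x * b - y * a))
    (e10 : c * x - a * z = -(z * a + w * c))
    (e11 : c * y - a * w = -(z * b - w * a)) :
    x + w = 0 := by
  have hb : b * (x + w) = 0 := by linear_combination e01
  have hc : c * (x + w) = 0 := by linear_combination e10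
  have ha : 2 * a * (x + w) = 0 := by linear_combination e00 - e11
  by_cases hxw : x + w = 0
  · exact hxw
  exfalso
  have hb0 : b = 0 := (mul_eq_zero.mp hb).resolve_right hxw
  have hc0 : c = 0 := (mul_eq_zero.mp hc).resolve_right hxw
  have ha0 : a = 0 := by
    have h2a := (mul_eq_zero.mp ha).resolve_right hxw
    rcases mul_eq_zero.mp h2a with h | h
    · exact absurd h h2
    · exact h
  rw [ha0, hb0, hc0] at hA
  simp at hA

lemma det_scalar_aux {a U U' al be ga : F} (ha : a*a = -1) (ha0 : a ≠ 0)
    (h2 : (2:F) ≠ 0) (hUU' : U*U' = 1) (hsq : al*al + be*ga = -1) :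
    ((U+U')/2 + ((U-U')/(2*a))*al) * ((U+U')/2 + ((U-U')/(2*a))*(-al))
      - (((U-U')/(2*a))*be)*(((U-U')/(2*a))*ga) = 1 := by
  have hainv : a⁻¹ = -a := by field_simp; linear_combination ha
  have h2a : ((2*a:F))⁻¹ = 2⁻¹ * (-a) := by rw [mul_inv, hainv]
  simp only [div_eq_mul_inv, h2a]
  field_simp
  linear_combination (a*a*(2*U*U' - U^2 - U'^2)) * hsq + ((U-U')^2) * ha + 4*hUU'

/-- the matrix `x(u)•1 + y(u)•A`. -/
noncomputable def PhiMat (a : F) (A : SL2) (u : Fˣ) : Matrix (Fin 2) (Fin 2) F :=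
  (((u : F) + ((u⁻¹ : Fˣ) : F)) / 2) • (1 : Matrix (Fin 2) (Fin 2) F)
    + (((u : F) - ((u⁻¹ : Fˣ) : F)) / (2 * a)) • A.1

lemma a_ne_zero {a : F} (ha : a * a = -1) : a ≠ 0 := fun h => by
  rw [h] at ha; simp at ha

lemma coeMatSq (A : SL2) (hA : A * A = negOne) :
    A.1 * A.1 = (-1 : Matrix (Fin 2) (Fin 2) F) := by
  rw [← Matrix.SpecialLinearGroup.coe_mul, hA, negOne_coe]

lemma PhiMat_mul (h2 : (2:F) ≠ 0) {a : F} (ha : a * a = -1) (A : SL2) (hA : A * A = negOne) (u v : Fˣ) :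
    PhiMat a A u * PhiMat a A v = PhiMat a A (u * v) := by
  have ha0 : a ≠ 0 := a_ne_zero ha
  have hu : (u : F) ≠ 0 := Units.ne_zero u
  have hv : (v : F) ≠ 0 := Units.ne_zero v
  have hM := coeMatSq A hA
  have hx : (((u*v : Fˣ) : F) + (((u*v)⁻¹ : Fˣ) : F)) / 2
      = (((u : F) + ((u⁻¹ : Fˣ) : F)) / 2) * (((v : F) + ((v⁻¹ : Fˣ) : F)) / 2)
        - (((u : F) - ((u⁻¹ : Fˣ) : F)) / (2 * a)) * (((v : F) - ((v⁻¹ : Fˣ) : F)) / (2 * a)) := by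
    simp only [Units.val_mul, mul_inv_rev, Units.val_inv_eq_inv_val]
    field_simp
    linear_combination ((u:F)^2 - 1) * ((v:F)^2 - 1) * ha
  have hy : (((u*v : Fˣ) : F) - (((u*v)⁻¹ : Fˣ) : F)) / (2 * a)
      = (((u : F) + ((u⁻¹ : Fˣ) : F)) / 2) * (((v : F) - ((v⁻¹ : Fˣ) : F)) / (2 * a))
        + (((u : F) - ((u⁻¹ : Fˣ) : F)) / (2 * a)) * (((v : F) + ((v⁻¹ : Fˣ) : F)) / 2) := by
    simp only [Units.val_mul, mul_inv_rev]
    field_simp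
    ring
  simp only [PhiMat, add_mul, mul_add, Matrix.smul_mul, Matrix.mul_smul, one_mul, mul_one,
    smul_smul, hM, smul_neg]
  rw [hx, hy, sub_smul, add_smul]
  module

lemma PhiMat_det (h2 : (2:F) ≠ 0) {a : F} (ha : a * a = -1) (A : SL2) (hA : A * A = negOne) (u : Fˣ) : (PhiMat a A u).det = 1 := by
  have ha0 : a ≠ 0 := a_ne_zero ha
  have hu : (u : F) ≠ 0 := Units.ne_zero u
  have htr := trace_eq_zero_of_sq A hA
  have hsq := entry_sq_of_sq A hA
  have hUU' : (u:F) * ((u:F))⁻¹ = 1 := mul_inv_cancel₀ hu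
  rw [PhiMat, Matrix.det_fin_two]
  simp only [Matrix.add_apply, Matrix.smul_apply, Matrix.one_apply, smul_eq_mul]
  norm_num
  rw [htr]
  linear_combination det_scalar_aux ha ha0 h2 hUU' hsq

lemma PhiMat_one (h2 : (2:F) ≠ 0) {a : F} (A : SL2) : PhiMat a A 1 = (1 : Matrix (Fin 2) (Fin 2) F) := by
  rw [PhiMat]
  norm_num
  rw [div_self h2]
  simp

/-- the homomorphism `Fˣ →* SL₂` onto the torus through `A`. -/
noncomputable def Phi (h2 : (2:F) ≠ 0) {a : F} (ha : a * a = -1) (A : SL2) (hA : A * A = negOne) : Fˣ →* SL2 where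
  toFun u := ⟨PhiMat a A u, PhiMat_det h2 ha A hA u⟩
  map_one' := Subtype.ext (by simpa using PhiMat_one h2 (a := a) A)
  map_mul' u v := Subtype.ext (PhiMat_mul h2 ha A hA u v).symm

lemma mk_negOne_eq_one : (QuotientGroup.mk negOne : PSL2 F) = 1 := by
  rw [QuotientGroup.eq_one_iff]
  exact mem_center_iff'.mpr (Or.inr rfl)

lemma sq_eq_one_cases (h2 : (2:F) ≠ 0) (A : SL2) (hA : A * A = 1) :
    A = 1 ∨ A = negOne := by
  have hm : A.1 * A.1 = (1 : Matrix (Fin 2) (Fin 2) F) := by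
    rw [← Matrix.SpecialLinearGroup.coe_mul, hA, Matrix.SpecialLinearGroup.coe_one]
  have hdet : A.1 0 0 * A.1 1 1 - A.1 0 1 * A.1 1 0 = 1 := by
    have := A.2; rwa [Matrix.det_fin_two] at this
  have e00 := congrFun (congrFun hm 0) 0
  have e01 := congrFun (congrFun hm 0) 1
  have e10 := congrFun (congrFun hm 1) 0
  have e11 := congrFun (congrFun hm 1) 1
  simp [Matrix.mul_apply, Fin.sum_univ_two, Matrix.one_apply] at e00 e01 e10 e11
  have key : (A.1 0 0 + A.1 1 1 - 2) * (A.1 0 0 + A.1 1 1 + 2) = 0 := by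
    linear_combination e00 + e11 + 2 * hdet
  have h2' : (2 : F) + 2 ≠ 0 := by
    intro h; apply h2; have : (2:F) * 2 = 0 := by linear_combination h
    rcases mul_eq_zero.mp this with h' | h' <;> exact h'
  rcases mul_eq_zero.mp key with h | h
  · left
    have htr : A.1 0 0 + A.1 1 1 = 2 := by linear_combination h
    have hb : A.1 0 1 = 0 := by
      have h2b : A.1 0 1 * 2 = 0 := by linear_combination e01 - A.1 0 1 * htr
      rcases mul_eq_zero.mp h2b with h' | h'; exact h'; exact absurd h' h2
    have hc : A.1 1 0 = 0 := by
      have h2c : A.1 1 0 * 2 = 0 := by linear_combination e10 - A.1 1 0 * htr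
      rcases mul_eq_zero.mp h2c with h' | h'; exact h'; exact absurd h' h2
    have ha1 : A.1 0 0 = 1 := by
      have hz : (A.1 0 0 - 1) * 2 = 0 := by
        linear_combination e00 + hdet - A.1 0 0 * htr
      rcases mul_eq_zero.mp hz with h' | h'
      · linear_combination h'
      · exact absurd h' h2
    have hd1 : A.1 1 1 = 1 := by linear_combination htr - ha1
    apply Subtype.ext
    rw [Matrix.eta_fin_two A.1, ha1, hb, hc, hd1, Matrix.SpecialLinearGroup.coe_one]
    simp [Matrix.one_fin_two]
  · right
    have htr : A.1 0 0 + A.1 1 1 = -2 := by linear_combination h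
    have hb : A.1 0 1 = 0 := by
      have h2b : A.1 0 1 * (-2) = 0 := by linear_combination e01 - A.1 0 1 * htr
      rcases mul_eq_zero.mp h2b with h' | h'; exact h'
      exact absurd (by linear_combination -h' : (2:F) = 0) h2
    have hc : A.1 1 0 = 0 := by
      have h2c : A.1 1 0 * (-2) = 0 := by linear_combination e10 - A.1 1 0 * htr
      rcases mul_eq_zero.mp h2c with h' | h'; exact h'
      exact absurd (by linear_combination -h' : (2:F) = 0) h2
    have ha1 : A.1 0 0 = -1 := by
      have hz : (A.1 0 0 + 1) * 2 = 0 := by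
        linear_combination -e00 - hdet + A.1 0 0 * htr
      rcases mul_eq_zero.mp hz with h' | h'
      · linear_combination h'
      · exact absurd h' h2
    have hd1 : A.1 1 1 = -1 := by linear_combination htr - ha1
    apply Subtype.ext
    rw [Matrix.eta_fin_two A.1, ha1, hb, hc, hd1, negOne_coe]
    ext i j
    fin_cases i <;> fin_cases j <;> simp [Matrix.one_apply]

/-- lift of an involution squares to `-1`. -/
lemma sq_lift (h2 : (2:F) ≠ 0) (j : PSL2 F) (hj : orderOf j = 2) :
    ∃ A : SL2, QuotientGroup.mk A = j ∧ A * A = negOne := by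
  obtain ⟨A, hA⟩ := QuotientGroup.mk_surjective j
  refine ⟨A, hA, ?_⟩
  have hsq : j * j = 1 := by
    have h := pow_orderOf_eq_one j
    rw [hj, pow_two] at h
    exact h
  have hcen : A * A ∈ Subgroup.center SL2 := by
    rw [← QuotientGroup.eq_one_iff, QuotientGroup.mk_mul, hA, hsq]
  rcases mem_center_iff'.mp hcen with h | h
  · exfalso
    rcases sq_eq_one_cases h2 A h with rfl | rfl
    · rw [← hA] at hj; simp at hj
    · rw [← hA, mk_negOne_eq_one] at hj; simp at hj
  · exact h

lemma sq_negOne_of_trace_zero (B : SL2) (htr : B.1 0 0 + B.1 1 1 = 0) :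
    B * B = negOne := by
  have hdet : B.1 0 0 * B.1 1 1 - B.1 0 1 * B.1 1 0 = 1 := by
    have := B.2; rwa [Matrix.det_fin_two] at this
  apply Subtype.ext
  rw [Matrix.SpecialLinearGroup.coe_mul, negOne_coe]
  ext i j
  fin_cases i <;> fin_cases j <;>
    simp [Matrix.mul_apply, Fin.sum_univ_two, Matrix.one_apply] <;>
    first
      | linear_combination -hdet + B.1 0 0 * htr
      | linear_combination B.1 0 1 * htr
      | linear_combination B.1 1 0 * htr
      | linear_combination -hdet + B.1 1 1 * htr
      | linear_combination hdet - B.1 0 0 * htr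
      | linear_combination hdet - B.1 1 1 * htr

/-- any element of `PSL₂` commuting with the involution `mk A` whose square is
nontrivial lies in the torus through `A`. -/
lemma mem_D_of (h2 : (2:F) ≠ 0) {a : F} (ha : a * a = -1) (A : SL2) (hA : A * A = negOne)
    (t : PSL2 F) (hcomm : Commute (QuotientGroup.mk A : PSL2 F) t) (ht2 : t * t ≠ 1) :
    ∃ u : Fˣ, (QuotientGroup.mk (Phi h2 ha A hA u) : PSL2 F) = t := by
  obtain ⟨B, hB⟩ := QuotientGroup.mk_surjective t
  have hAB : (QuotientGroup.mk (A * B) : PSL2 F) = QuotientGroup.mk (B * A) := by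
    rw [QuotientGroup.mk_mul, QuotientGroup.mk_mul, hB]
    exact hcomm
  have htr := trace_eq_zero_of_sq A hA
  have hsq := entry_sq_of_sq A hA
  rcases mk_eq_mk.mp hAB with h | h
  · -- commuting lifts
    have hm : B.1 * A.1 = A.1 * B.1 := by
      rw [← Matrix.SpecialLinearGroup.coe_mul, ← Matrix.SpecialLinearGroup.coe_mul, h]
    have e01 := congrFun (congrFun hm.symm 0) 1
    have e10 := congrFun (congrFun hm.symm 1) 0
    have e11 := congrFun (congrFun hm.symm 1) 1
    simp [Matrix.mul_apply, Fin.sum_univ_two] at e01 e10 e11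
    obtain ⟨s, τ, hx, hy, hz, hw⟩ :=
      commutant_scalar h2 (A.1 0 0) (A.1 0 1) (A.1 1 0) (B.1 0 0) (B.1 0 1) (B.1 1 0) (B.1 1 1)
        hsq (by linear_combination e01 + B.1 0 1 * htr)
        (by linear_combination e10 - B.1 1 0 * htr)
        (by linear_combination e11)
    have hdetB : B.1 0 0 * B.1 1 1 - B.1 0 1 * B.1 1 0 = 1 := by
      have := B.2; rwa [Matrix.det_fin_two] at this
    have hst : s * s + τ * τ = 1 := by
      rw [hx, hy, hz, hw] at hdetB
      linear_combination hdetB + τ * τ * hsq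
    have hne : (s + τ * a) * (s - τ * a) = 1 := by
      linear_combination hst - τ * τ * ha
    refine ⟨⟨s + τ * a, s - τ * a, hne, by linear_combination hne⟩, ?_⟩
    rw [← hB]
    congr 1
    apply Subtype.ext
    show PhiMat a A _ = B.1
    rw [PhiMat]
    have hxc : ((s + τ * a) + (s - τ * a)) / 2 = s := by rw [div_eq_iff h2]; ring
    have ha0 : a ≠ 0 := a_ne_zero ha
    have hyc : ((s + τ * a) - (s - τ * a)) / (2 * a) = τ := by
      rw [div_eq_iff (mul_ne_zero h2 ha0)]; ring
    show ((((⟨s + τ * a, s - τ * a, hne, by linear_combination hne⟩ : Fˣ) : F)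
        + (((⟨s + τ * a, s - τ * a, hne, by linear_combination hne⟩ : Fˣ)⁻¹ : Fˣ) : F)) / 2)
        • (1 : Matrix (Fin 2) (Fin 2) F) + _ • A.1 = B.1
    rw [show (((⟨s + τ * a, s - τ * a, hne, by linear_combination hne⟩ : Fˣ)⁻¹ : Fˣ) : F)
        = s - τ * a from rfl]
    rw [show (((⟨s + τ * a, s - τ * a, hne, by linear_combination hne⟩ : Fˣ) : F))
        = s + τ * a from rfl]
    rw [hxc, hyc]
    ext i j
    fin_cases i <;> fin_cases j <;>
      simp [Matrix.one_apply, hx, hy, hz, hw, htr] <;> ring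
  · -- anticommuting lifts: contradiction
    exfalso
    apply ht2
    have hm : B.1 * A.1 = -(A.1 * B.1) := by
      have := congrArg Subtype.val h
      simp only [Matrix.SpecialLinearGroup.coe_mul, negOne_coe] at this
      rw [this]; simp [mul_neg]
    have e00 := congrFun (congrFun hm 0) 0
    have e01 := congrFun (congrFun hm 0) 1
    have e10 := congrFun (congrFun hm 1) 0
    have e11 := congrFun (congrFun hm 1) 1
    simp [Matrix.mul_apply, Fin.sum_univ_two] at e00 e01 e10 e11
    have hBtr : B.1 0 0 + B.1 1 1 = 0 := by
      apply anticommutant_scalar h2 (A.1 0 0) (A.1 0 1) (A.1 1 0)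
        (B.1 0 0) (B.1 0 1) (B.1 1 0) (B.1 1 1) hsq
      · linear_combination e00
      · linear_combination e01 - B.1 0 1 * htr
      · linear_combination e10 - B.1 1 0 * htr
      · linear_combination e11 - 2 * B.1 1 1 * htr
    have := sq_negOne_of_trace_zero B hBtr
    rw [← hB, ← QuotientGroup.mk_mul, this, mk_negOne_eq_one]

lemma Phi_neg_one (h2 : (2:F) ≠ 0) {a : F} (ha : a * a = -1) (A : SL2) (hA : A * A = negOne) :
    Phi h2 ha A hA (-1) = negOne := by
  apply Subtype.ext
  show PhiMat a A (-1) = (negOne : SL2).1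
  rw [PhiMat, negOne_coe]
  have h1 : (((-1 : Fˣ) : F)) = -1 := rfl
  have h2' : ((((-1 : Fˣ)⁻¹ : Fˣ)) : F) = -1 := by norm_num
  rw [h1, h2']
  have : ((-1 : F) + -1) / 2 = -1 := by rw [div_eq_iff h2]; ring
  rw [this]
  simp

/-- kernel of the composite map. -/
lemma Phi_mk_eq_one_iff (h2 : (2:F) ≠ 0) {a : F} (ha : a * a = -1) (A : SL2)
    (hA : A * A = negOne) (u : Fˣ) :
    (QuotientGroup.mk (Phi h2 ha A hA u) : PSL2 F) = 1 ↔ u = 1 ∨ u = -1 := by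
  have ha0 : a ≠ 0 := a_ne_zero ha
  have htr := trace_eq_zero_of_sq A hA
  have hsq := entry_sq_of_sq A hA
  constructor
  · intro h
    rw [QuotientGroup.eq_one_iff, mem_center_iff'] at h
    have key : ∀ c : F, PhiMat a A u = c • (1 : Matrix (Fin 2) (Fin 2) F) →
        (u:F) - ((u:F))⁻¹ = 0 := by
      intro c hc
      have g01 := congrFun (congrFun hc 0) 1
      have g10 := congrFun (congrFun hc 1) 0
      have g00 := congrFun (congrFun hc 0) 0
      have g11 := congrFun (congrFun hc 1) 1
      simp [PhiMat, Matrix.add_apply, Matrix.smul_apply, Matrix.one_apply,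
        Units.val_inv_eq_inv_val] at g01 g10 g00 g11
      have resolve : ((u:F) - ((u:F))⁻¹ = 0 ∨ (2:F) = 0 ∨ a = 0) → (u:F) - ((u:F))⁻¹ = 0 := by
        rintro (h' | h' | h')
        · exact h'
        · exact absurd h' h2
        · exact absurd h' ha0
      by_cases hb : A.1 0 1 ≠ 0
      · rcases g01 with h' | h'
        · exact resolve h'
        · exact absurd h' hb
      push_neg at hb
      by_cases hcn : A.1 1 0 ≠ 0
      · rcases g10 with h' | h'
        · exact resolve h'
        · exact absurd h' hcn
      push_neg at hcn
      have haa : A.1 0 0 ≠ 0 := by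
        intro h0
        rw [h0, hb, hcn] at hsq
        simp at hsq
      have h2y : (((u:F) - ((u:F))⁻¹) / (2 * a)) * (2 * A.1 0 0) = 0 := by
        rw [htr] at g11
        linear_combination g00 - g11
      rcases mul_eq_zero.mp h2y with h' | h'
      · exact resolve (by
          rcases div_eq_zero_iff.mp h' with h'' | h''
          · exact Or.inl h''
          · rcases mul_eq_zero.mp h'' with h3 | h3
            · exact Or.inr (Or.inl h3)
            · exact Or.inr (Or.inr h3))
      · rcases mul_eq_zero.mp h' with h'' | h''
        · exact absurd h'' h2
        · exact absurd h'' haa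
    have hz : (u:F) - ((u:F))⁻¹ = 0 := by
      rcases h with h | h
      · have hval : PhiMat a A u = (1 : Matrix (Fin 2) (Fin 2) F) := congrArg Subtype.val h
        exact key 1 (by rw [hval, one_smul])
      · have hval : PhiMat a A u = (-1 : Matrix (Fin 2) (Fin 2) F) := congrArg Subtype.val h
        exact key (-1) (by rw [hval]; simp)
    have heq : (u:F) = ((u:F))⁻¹ := by linear_combination hz
    have hval2 : (u:F) * (u:F) = 1 := by
      nth_rewrite 2 [heq]
      exact mul_inv_cancel₀ (Units.ne_zero u)
    rcases mul_self_eq_one_iff.mp hval2 with h' | h'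
    · left; exact Units.ext (by simpa using h')
    · right; exact Units.ext (by simpa using h')
  · rintro (rfl | rfl)
    · rw [map_one]
      simp
    · rw [Phi_neg_one h2 ha A hA, mk_negOne_eq_one]

instance psl2_finite [Finite F] : Finite (PSL2 F) := by
  have : Finite SL2 := Subtype.finite
  exact Quotient.finite _

lemma torus_card [Fintype F] (h2 : (2:F) ≠ 0) {a : F} (ha : a * a = -1)
    (A : SL2) (hA : A * A = negOne) :
    Nat.card (((QuotientGroup.mk' (Subgroup.center SL2)).comp (Phi h2 ha A hA)).range)
      * 2 = Fintype.card F - 1 := by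
  set Psi := (QuotientGroup.mk' (Subgroup.center SL2)).comp (Phi h2 ha A hA) with hPsi
  have hker : Psi.ker = Subgroup.zpowers (-1 : Fˣ) := by
    ext u
    rw [MonoidHom.mem_ker]
    constructor
    · intro hu
      have : (QuotientGroup.mk (Phi h2 ha A hA u) : PSL2 F) = 1 := hu
      rcases (Phi_mk_eq_one_iff h2 ha A hA u).mp this with rfl | rfl
      · exact Subgroup.one_mem _
      · exact Subgroup.mem_zpowers _
    · rintro ⟨k, rfl⟩
      have h1 : Psi (-1) = 1 := by
        show (QuotientGroup.mk (Phi h2 ha A hA (-1)) : PSL2 F) = 1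
        rw [Phi_neg_one h2 ha A hA, mk_negOne_eq_one]
      rw [map_zpow, h1, one_zpow]
  have hcard_ker : Nat.card Psi.ker = 2 := by
    rw [hker, Nat.card_zpowers]
    apply orderOf_eq_prime
    · simp
    · intro h
      apply h2
      have := congrArg Units.val h
      simp at this
      linear_combination -this
  have hiso : Nat.card (Fˣ ⧸ Psi.ker) = Nat.card Psi.range :=
    Nat.card_congr (QuotientGroup.quotientKerEquivRange Psi).toEquiv
  have htot : Nat.card Fˣ = Nat.card (Fˣ ⧸ Psi.ker) * Nat.card Psi.ker :=
    Subgroup.card_eq_card_quotient_mul_card_subgroup Psi.ker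
  have hunits : Nat.card Fˣ = Fintype.card F - 1 := by
    rw [Nat.card_units, Nat.card_eq_fintype_card]
  rw [hcard_ker, hiso] at htot
  omega

lemma torus_unique [Fintype F] (h2 : (2:F) ≠ 0) {a : F} (ha : a * a = -1)
    (j : PSL2 F) (hj : orderOf j = 2) (T T' : Subgroup (PSL2 F))
    (hTc : IsCyclic T) (hT'c : IsCyclic T')
    (hcard : Nat.card T * 2 = Fintype.card F - 1)
    (hcard' : Nat.card T' * 2 = Fintype.card F - 1)
    (hn : 2 < Nat.card T)
    (hjT : j ∈ T) (hjT' : j ∈ T') : T = T' := by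
  obtain ⟨A, hAj, hA⟩ := sq_lift h2 j hj
  set Psi := (QuotientGroup.mk' (Subgroup.center SL2)).comp (Phi h2 ha A hA) with hPsi
  have main : ∀ S : Subgroup (PSL2 F), IsCyclic S →
      Nat.card S * 2 = Fintype.card F - 1 → j ∈ S → S = Psi.range := by
    intro S hSc hScard hjS
    have hnS : 2 < Nat.card S := by omega
    obtain ⟨g, hg⟩ := hSc.exists_generator
    have hSz : S = Subgroup.zpowers (g : PSL2 F) := by
      apply le_antisymm
      · intro x hx
        obtain ⟨k, hk⟩ := hg ⟨x, hx⟩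
        refine ⟨k, ?_⟩
        have := congrArg Subtype.val hk
        simpa using this
      · exact Subgroup.zpowers_le.mpr g.2
    have hjz : Commute (QuotientGroup.mk A : PSL2 F) ((g : PSL2 F)) := by
      rw [hAj]
      have hmem : j ∈ Subgroup.zpowers ((g : PSL2 F)) := hSz ▸ hjS
      obtain ⟨k, hk⟩ := hmem
      rw [← hk]
      exact ((Commute.refl ((g : PSL2 F))).zpow_left k)
    have hcards : Nat.card S = Nat.card (Subgroup.zpowers ((g : PSL2 F))) :=
      congrArg (fun H : Subgroup (PSL2 F) => Nat.card H) hSz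
    have hord : orderOf ((g : PSL2 F)) = Nat.card S := by
      rw [hcards, Nat.card_zpowers]
    have ht2 : ((g : PSL2 F)) * ((g : PSL2 F)) ≠ 1 := by
      intro hgg
      have hdvd : orderOf ((g : PSL2 F)) ∣ 2 :=
        orderOf_dvd_of_pow_eq_one (by rw [pow_two]; exact hgg)
      have := Nat.le_of_dvd (by norm_num) hdvd
      omega
    obtain ⟨u, hu⟩ := mem_D_of h2 ha A hA _ hjz ht2
    have hle : S ≤ Psi.range := by
      rw [hSz]
      exact Subgroup.zpowers_le.mpr ⟨u, hu⟩
    have hc2 := torus_card h2 ha A hA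
    have hc2' : Nat.card Psi.range * 2 = Fintype.card F - 1 := hc2
    have hcardle : Nat.card Psi.range ≤ Nat.card S := by omega
    exact Subgroup.eq_of_le_of_card_ge hle hcardle
  rw [main T hTc hcard hjT, main T' hT'c hcard' hjT']

end Aux

/-- Let `G = PSL₂(q)`, `q ≡ 1 mod 4`, `q = p^k`, `p` an odd prime.
Let `T₁, T₂ ≤ G` be cyclic subgroups of cardinality `(q-1)/2` with involutions
`i₁ ∈ T₁`, `i₂ ∈ T₂`.  If `i₁·i₂` has odd order `m` and `z = (i₁·i₂)^{(m+1)/2}`, then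
`z⁻¹ T₁ z = T₂`. -/
theorem conjugate_torus (p k q : ℕ) (hp : p.Prime) (hpodd : Odd p)
    (hq : q = p ^ k) (hq4 : q % 4 = 1)
    (F : Type*) [Field F] [Fintype F] (hF : Fintype.card F = q)
    (T₁ T₂ : Subgroup (PSL2 F)) (hT₁cyc : IsCyclic T₁) (hT₂cyc : IsCyclic T₂)
    (hT₁card : Nat.card T₁ = (q - 1) / 2) (hT₂card : Nat.card T₂ = (q - 1) / 2)
    (i₁ i₂ : PSL2 F) (hi₁ : orderOf i₁ = 2) (hi₂ : orderOf i₂ = 2)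
    (hi₁T : i₁ ∈ T₁) (hi₂T : i₂ ∈ T₂)
    (m : ℕ) (hm : orderOf (i₁ * i₂) = m) (hmodd : Odd m) :
    Subgroup.map
      (MulAut.conj (((i₁ * i₂) ^ ((m + 1) / 2))⁻¹)).toMonoidHom T₁ = T₂ := by
  -- basic arithmetic facts
  have hq2 : 2 ≤ q := hF ▸ Fintype.one_lt_card
  have hq5 : 5 ≤ q := by omega
  -- 2 ≠ 0 in F
  have h2F : (2 : F) ≠ 0 := by
    intro h20
    have hd : ringChar F ∣ 2 := by
      haveI := ringChar.charP F
      exact_mod_cast (CharP.cast_eq_zero_iff F (ringChar F) 2).mp (by exact_mod_cast h20)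
    rcases (Nat.dvd_prime Nat.prime_two).mp hd with h | h
    · exact CharP.ringChar_ne_one h
    · have : Fintype.card F % 2 = 0 := (FiniteField.even_card_iff_char_two).mp h
      omega
  -- a square root of -1
  have hsqm1 : IsSquare (-1 : F) := by
    rw [FiniteField.isSquare_neg_one_iff, hF]
    omega
  obtain ⟨a, ha'⟩ := hsqm1
  have ha : a * a = -1 := ha'.symm
  -- group-theoretic computation with the involutions
  set r := (m + 1) / 2 with hr
  set z := (i₁ * i₂) ^ r with hzdef
  have hi1sq : i₁ * i₁ = 1 := by
    have h := pow_orderOf_eq_one i₁; rwa [hi₁, pow_two] at h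
  have hi2sq : i₂ * i₂ = 1 := by
    have h := pow_orderOf_eq_one i₂; rwa [hi₂, pow_two] at h
  have hinv1 : i₁⁻¹ = i₁ := inv_eq_of_mul_eq_one_right hi1sq
  have hinv2 : i₂⁻¹ = i₂ := inv_eq_of_mul_eq_one_right hi2sq
  have hcm : (i₁ * i₂) ^ m = 1 := by rw [← hm]; exact pow_orderOf_eq_one _
  have hconj : i₁ * (i₁ * i₂) * i₁⁻¹ = (i₁ * i₂)⁻¹ := by
    rw [hinv1, mul_inv_rev, hinv1, hinv2]
    rw [show i₁ * (i₁ * i₂) * i₁ = (i₁ * i₁) * (i₂ * i₁) by group, hi1sq, one_mul]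
  have hpow : i₁ * z * i₁⁻¹ = z⁻¹ := by
    rw [hzdef, ← conj_pow, hconj, inv_pow]
  have h2r : z * z = (i₁ * i₂) ^ (m + 1) := by
    rw [hzdef, ← pow_add]
    congr 1
    obtain ⟨l, rfl⟩ := hmodd
    omega
  have hkey : z⁻¹ * i₁ * z = i₂ := by
    have h1 : i₁ * z = z⁻¹ * i₁ := by
      have := hpow
      rw [hinv1] at this
      calc i₁ * z = (i₁ * z * i₁) * i₁ := by rw [mul_assoc, hi1sq, mul_one]
        _ = z⁻¹ * i₁ := by rw [this]
    calc z⁻¹ * i₁ * z = (z⁻¹ * i₁) * z := rfl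
      _ = (i₁ * z) * z := by rw [← h1]
      _ = i₁ * (z * z) := by rw [mul_assoc]
      _ = i₁ * ((i₁ * i₂) ^ m * (i₁ * i₂)) := by rw [h2r, pow_succ]
      _ = i₁ * (i₁ * i₂) := by rw [hcm, one_mul]
      _ = (i₁ * i₁) * i₂ := by rw [mul_assoc]
      _ = i₂ := by rw [hi1sq, one_mul]
  set f := (MulAut.conj (z⁻¹)).toMonoidHom with hfdef
  have hfi : f i₁ = i₂ := by
    show (MulAut.conj (z⁻¹)) i₁ = i₂
    rw [MulAut.conj_apply, inv_inv]
    exact hkey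
  have finj : Function.Injective f := (MulAut.conj (z⁻¹)).injective
  -- properties of the image subgroup
  have e1 := Subgroup.equivMapOfInjective T₁ f finj
  haveI := hT₁cyc
  have hmapcyc : IsCyclic (Subgroup.map f T₁) := isCyclic_of_surjective e1 e1.surjective
  have hmapcard : Nat.card (Subgroup.map f T₁) = (q - 1) / 2 := by
    rw [← Nat.card_congr e1.toEquiv, hT₁card]
  have hmapmem : i₂ ∈ Subgroup.map f T₁ := Subgroup.mem_map.mpr ⟨i₁, hi₁T, hfi⟩
  by_cases hn2 : 2 < (q - 1) / 2
  · -- main case: apply uniqueness of the torus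
    apply torus_unique h2F ha i₂ hi₂ _ _ hmapcyc hT₂cyc
      (by rw [hmapcard, hF]; omega) (by rw [hT₂card, hF]; omega)
      (by rw [hmapcard]; exact hn2) hmapmem hi₂T
  · -- degenerate case: (q-1)/2 = 2
    have hn2' : (q - 1) / 2 = 2 := by omega
    have hT1z : Subgroup.zpowers i₁ = T₁ := by
      apply Subgroup.eq_of_le_of_card_ge (Subgroup.zpowers_le.mpr hi₁T)
      rw [Nat.card_zpowers, hi₁, hT₁card, hn2']
    have hT2z : Subgroup.zpowers i₂ = T₂ := by
      apply Subgroup.eq_of_le_of_card_ge (Subgroup.zpowers_le.mpr hi₂T)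
      rw [Nat.card_zpowers, hi₂, hT₂card, hn2']
    rw [← hT1z, ← hT2z, MonoidHom.map_zpowers, hfi]
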